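/- Let P, Q : ℤ → ℝ with P(n) ≠ 0 for all n. Then 2·𝒫₂ applied to the pair ( ½(1/P² − Q⁺/(P²P⁺) − Q/(P⁻P²)), 1/(2P⁻P) ) equals ( Q⁺/P⁺ − Q/P⁻, Q/P − Q/P⁻ ). In other words, the first negative flow of the Ablowitz–Ladik hierarchy is the Hamiltonian system with operator 𝒫₂ and Hamiltonian 2G₁, where G₁ = Σₙ g₁(n) with g₁ = ½(Q⁺/(PP⁺) − 1/P), whose variational derivatives are δG₁/δP = ½(1/P² − Q⁺/(P²P⁺) − Q/(P⁻P²)) and δG₁/δQ = 1/(2P⁻P). -/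

import Mathlib

/-- The shift operator: `(shift f) n = f (n+1)`, i.e. `f⁺`. -/
def shift (f : ℤ → ℝ) : ℤ → ℝ := fun n => f (n + 1)

/-- The inverse shift operator: `(shiftInv f) n = f (n-1)`, i.e. `f⁻`. -/
def shiftInv (f : ℤ → ℝ) : ℤ → ℝ := fun n => f (n - 1)

/-- The second Hamiltonian operator of the Ablowitz–Ladik hierarchy:
`𝒫₂(ξ) = ( P((Qξ₂)⁺ − Qξ₂) , Q(Pξ₁ − (Pξ₁)⁻) + Q((Qξ₂)⁺ − (Qξ₂)⁻) )`. -/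
def P2op (P Q : ℤ → ℝ) (ξ : (ℤ → ℝ) × (ℤ → ℝ)) : (ℤ → ℝ) × (ℤ → ℝ) :=
  (P * (shift (Q * ξ.2) - Q * ξ.2),
   Q * (P * ξ.1 - shiftInv (P * ξ.1)) + Q * (shift (Q * ξ.2) - shiftInv (Q * ξ.2)))

/-- The first negative flow of the Ablowitz–Ladik hierarchy is the
Hamiltonian system with operator `𝒫₂` and Hamiltonian `2G₁`, where
`δG₁/δP = ½(1/P² − Q⁺/(P²P⁺) − Q/(P⁻P²))` and `δG₁/δQ = 1/(2P⁻P)`: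
`2·𝒫₂` applied to this pair of variational derivatives equals
`( Q⁺/P⁺ − Q/P⁻, Q/P − Q/P⁻ )`. -/
theorem first_negative_flow_hamiltonian_P2 (P Q : ℤ → ℝ) (hP : ∀ n : ℤ, P n ≠ 0) :
    (2 : ℝ) • P2op P Q
        (fun n => (1 / 2) * (1 / P n ^ 2 - Q (n + 1) / (P n ^ 2 * P (n + 1)) -
            Q n / (P (n - 1) * P n ^ 2)),
         fun n => 1 / (2 * P (n - 1) * P n)) =
      (fun n => Q (n + 1) / P (n + 1) - Q n / P (n - 1),
       fun n => Q n / P n - Q n / P (n - 1)) := by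
  unfold P2op shift shiftInv
  refine Prod.ext ?_ ?_ <;> funext n <;>
    simp only [Prod.smul_fst, Prod.smul_snd, Pi.smul_apply, Pi.mul_apply, Pi.sub_apply, Pi.add_apply, smul_eq_mul,
      add_sub_cancel_right, sub_add_cancel]
  · have h1 := hP n; have h2 := hP (n+1); have h3 := hP (n-1)
    field_simp
  · have h1 := hP n; have h2 := hP (n+1); have h3 := hP (n-1); have h4 := hP (n-1-1)
    field_simp
    ring
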